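/- Under the hypotheses below, in the integral group ring ℤ[G × U] one has T̲₃ · T̲₃ = w·nλ·T̲₀ + w·λ·T̲₂ + (w−1)·μ·T̲₃ + (w−1)·ν·T̲₄, where for a subset A of G × U, A̲ denotes the sum of the elements of A. -/

import Mathlib

open scoped Pointwise

/-- The sum of the elements of a finite subset `A` of a group `G`
in the integral group ring `ℤ[G]`. -/
noncomputable def grpSum (G : Type*) [Group G] (A : Finset G) : MonoidAlgebra ℤ G :=
  ∑ a ∈ A, MonoidAlgebra.of ℤ G a


section Aux
variable {G U : Type*} [Group G] [Group U]

/-- Embedding of ℤ[G] into ℤ[G×U] shifting the U-coordinate to `t`. -/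
noncomputable def embMap (G : Type*) (U : Type*) [Group G] [Group U] (t : U) :
    MonoidAlgebra ℤ G →+ MonoidAlgebra ℤ (G × U) :=
  { toFun := MonoidAlgebra.mapDomain (fun g => (g, t))
    map_zero' := MonoidAlgebra.mapDomain_zero _
    map_add' := MonoidAlgebra.mapDomain_add _ }

lemma embMap_single (t : U) (g : G) (r : ℤ) :
    embMap G U t (MonoidAlgebra.single g r) = MonoidAlgebra.single (g, t) r := by
  show MonoidAlgebra.mapDomain _ _ = _
  exact MonoidAlgebra.mapDomain_single

lemma embMap_grpSum (t : U) (A : Finset G) :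
    embMap G U t (grpSum G A) = ∑ a ∈ A, MonoidAlgebra.of ℤ (G × U) (a, t) := by
  rw [grpSum, map_sum]
  refine Finset.sum_congr rfl fun a _ => ?_
  rw [MonoidAlgebra.of_apply, MonoidAlgebra.of_apply, embMap_single]

lemma embMap_one (t : U) :
    embMap G U t (1 : MonoidAlgebra ℤ G) = MonoidAlgebra.of ℤ (G × U) (1, t) := by
  rw [MonoidAlgebra.one_def, MonoidAlgebra.of_apply, embMap_single]

lemma grpSum_prod (A : Finset G) (t : U) :
    grpSum (G × U) (A ×ˢ {t}) = embMap G U t (grpSum G A) := by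
  rw [embMap_grpSum, grpSum, Finset.sum_product]
  simp

lemma embMap_mul_grpSum (u v : U) (A B : Finset G) :
    embMap G U u (grpSum G A) * embMap G U v (grpSum G B) =
      embMap G U (u * v) (grpSum G A * grpSum G B) := by
  rw [embMap_grpSum, embMap_grpSum, grpSum, grpSum, Finset.sum_mul_sum, Finset.sum_mul_sum,
    map_sum]
  refine Finset.sum_congr rfl fun a _ => ?_
  rw [map_sum]
  refine Finset.sum_congr rfl fun b _ => ?_
  simp only [MonoidAlgebra.of_apply, MonoidAlgebra.single_mul_single, one_mul, embMap_single,
    Prod.mk_mul_mk]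

lemma filter_eq_biUnion [Fintype G] [Fintype U] [DecidableEq G] [DecidableEq U]
    (P : U → Finset G) :
    (Finset.univ.filter (fun p : G × U => p.2 ≠ 1 ∧ p.1 ∈ P p.2)) =
      (Finset.univ.erase 1).biUnion (fun u => P u ×ˢ ({u} : Finset U)) := by
  ext ⟨x, u⟩
  simp only [Finset.mem_filter, Finset.mem_univ, true_and, Finset.mem_biUnion,
    Finset.mem_erase, Finset.mem_product, Finset.mem_singleton]
  constructor
  · rintro ⟨h1, h2⟩; exact ⟨u, ⟨h1, trivial⟩, h2, rfl⟩
  · rintro ⟨v, ⟨hv, -⟩, hx, rfl⟩; exact ⟨hv, hx⟩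

lemma grpSum_slices [Fintype G] [Fintype U] [DecidableEq G] [DecidableEq U]
    (P : U → Finset G) :
    grpSum (G × U) (Finset.univ.filter (fun p : G × U => p.2 ≠ 1 ∧ p.1 ∈ P p.2)) =
      ∑ u ∈ Finset.univ.erase 1, embMap G U u (grpSum G (P u)) := by
  rw [filter_eq_biUnion, grpSum, Finset.sum_biUnion]
  · exact Finset.sum_congr rfl fun u _ => grpSum_prod (P u) u
  · intro u _ v _ huv
    simp only [Finset.disjoint_left, Finset.mem_product, Finset.mem_singleton]
    rintro ⟨x, s⟩ ⟨-, rfl⟩ ⟨-, h⟩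
    exact huv h

end Aux

theorem linked_system_T3_mul_T3
    {G U : Type*} [Group G] [Fintype G] [DecidableEq G]
    [Group U] [Fintype U] [DecidableEq U]
    (N : Subgroup G) [DecidablePred (· ∈ N)]
    (n l w μ ν : ℕ) (hn : 2 ≤ n) (hN : Nat.card N = n) (hl : 1 ≤ l)
    (hG : Fintype.card G = n ^ 2 * l) (hU : Fintype.card U = w + 1) (hw : 2 ≤ w)
    (X : U → Finset G)
    (hXinv : ∀ u : U, u ≠ 1 → (X u)⁻¹ = X u⁻¹)
    (hXtrans : ∀ u : U, u ≠ 1 → ∀ g : G, ((X u).filter (fun x => g⁻¹ * x ∈ N)).card = 1)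
    (hXX : ∀ u : U, u ≠ 1 →
      grpSum G (X u) * grpSum G (X u⁻¹) =
        ((n * l : ℕ) : ℤ) • (1 : MonoidAlgebra ℤ G) +
          (l : ℤ) • grpSum G (Finset.univ.filter (· ∉ N)))
    (hXY : ∀ u v : U, u ≠ 1 → v ≠ 1 → u * v ≠ 1 →
      grpSum G (X u) * grpSum G (X v) =
        (μ : ℤ) • grpSum G (X (u * v)) + (ν : ℤ) • grpSum G (Finset.univ \ X (u * v)))
    (T₀ T₁ T₂ T₃ T₄ : Finset (G × U))
    (hT₀ : T₀ = {(1, 1)})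
    (hT₁ : T₁ = ((Finset.univ.filter (· ∈ N)).erase 1) ×ˢ {(1 : U)})
    (hT₂ : T₂ = (Finset.univ.filter (· ∉ N)) ×ˢ {(1 : U)})
    (hT₃ : T₃ = Finset.univ.filter (fun p : G × U => p.2 ≠ 1 ∧ p.1 ∈ X p.2))
    (hT₄ : T₄ = Finset.univ.filter (fun p : G × U => p.2 ≠ 1 ∧ p.1 ∉ X p.2)) :
    grpSum (G × U) T₃ * grpSum (G × U) T₃ =
        ((w * (n * l) : ℕ) : ℤ) • grpSum (G × U) T₀ +
          ((w * l : ℕ) : ℤ) • grpSum (G × U) T₂ +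
          (((w - 1) * μ : ℕ) : ℤ) • grpSum (G × U) T₃ +
          (((w - 1) * ν : ℕ) : ℤ) • grpSum (G × U) T₄ := by
  classical
  set E : Finset U := Finset.univ.erase 1 with hE
  have hmemE : ∀ u : U, u ∈ E ↔ u ≠ 1 := by intro u; simp [hE]
  have hEcard : E.card = w := by
    rw [hE, Finset.card_erase_of_mem (Finset.mem_univ _), Finset.card_univ, hU]
    omega
  have h3 : grpSum (G × U) T₃ = ∑ u ∈ E, embMap G U u (grpSum G (X u)) := by
    rw [hT₃]; exact grpSum_slices X
  have h4 : grpSum (G × U) T₄ = ∑ u ∈ E, embMap G U u (grpSum G (Finset.univ \ X u)) := by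
    rw [hT₄, ← grpSum_slices (fun u => Finset.univ \ X u)]
    congr 1
    apply Finset.filter_congr
    intro p _
    simp [Finset.mem_sdiff]
  have h0 : grpSum (G × U) T₀ = embMap G U 1 (1 : MonoidAlgebra ℤ G) := by
    rw [hT₀, embMap_one, grpSum, Finset.sum_singleton]
  have h2 : grpSum (G × U) T₂
      = embMap G U 1 (grpSum G (Finset.univ.filter (· ∉ N))) := by
    rw [hT₂, grpSum_prod]
  set F : U → MonoidAlgebra ℤ (G × U) := fun t =>
    embMap G U t ((μ : ℤ) • grpSum G (X t) + (ν : ℤ) • grpSum G (Finset.univ \ X t)) with hF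
  set Dg : MonoidAlgebra ℤ (G × U) :=
    embMap G U 1 (((n * l : ℕ) : ℤ) • (1 : MonoidAlgebra ℤ G)
      + (l : ℤ) • grpSum G (Finset.univ.filter (· ∉ N))) with hDg
  have key : ∀ u ∈ E,
      (∑ v ∈ E, embMap G U u (grpSum G (X u)) * embMap G U v (grpSum G (X v)))
        = Dg + ∑ t ∈ E.erase u, F t := by
    intro u hu
    have hu1 : u ≠ 1 := (hmemE u).mp hu
    have huinv : u⁻¹ ∈ E := (hmemE _).mpr (inv_ne_one.mpr hu1)
    rw [← Finset.add_sum_erase _ _ huinv]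
    congr 1
    · rw [embMap_mul_grpSum, mul_inv_cancel, hXX u hu1, hDg]
    · refine Finset.sum_bij' (fun v _ => u * v) (fun t _ => u⁻¹ * t) ?_ ?_ ?_ ?_ ?_
      · intro v hv
        simp only [Finset.mem_erase, hmemE] at hv ⊢
        refine ⟨fun h => hv.2 (mul_left_cancel (h.trans (mul_one u).symm)),
          fun h => hv.1 (mul_left_cancel (h.trans (mul_inv_cancel u).symm))⟩
      · intro t ht
        simp only [Finset.mem_erase, hmemE] at ht ⊢
        refine ⟨fun h => ht.2 (mul_left_cancel (h.trans (mul_one u⁻¹).symm)),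
          fun h => ht.1 (mul_left_cancel (h.trans (inv_mul_cancel u).symm))⟩
      · intro v _; group
      · intro t _; group
      · intro v hv
        simp only [Finset.mem_erase, hmemE] at hv
        have huv : u * v ≠ 1 :=
          fun h => hv.1 (mul_left_cancel (h.trans (mul_inv_cancel u).symm))
        rw [embMap_mul_grpSum, hXY u v hu1 hv.2 huv, hF]
  have hS : (∑ t ∈ E, F t)
      = (μ : ℤ) • grpSum (G × U) T₃ + (ν : ℤ) • grpSum (G × U) T₄ := by
    rw [h3, h4, Finset.smul_sum, Finset.smul_sum, ← Finset.sum_add_distrib]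
    refine Finset.sum_congr rfl fun t _ => ?_
    rw [hF]
    simp only [map_add, map_zsmul]
  have hDg' : Dg = ((n * l : ℕ) : ℤ) • grpSum (G × U) T₀
      + (l : ℤ) • grpSum (G × U) T₂ := by
    rw [hDg, h0, h2, map_add, map_zsmul, map_zsmul]
  calc grpSum (G × U) T₃ * grpSum (G × U) T₃
      = ∑ u ∈ E, ∑ v ∈ E, embMap G U u (grpSum G (X u)) * embMap G U v (grpSum G (X v)) := by
        rw [h3, Finset.sum_mul_sum]
    _ = ∑ u ∈ E, (Dg + ∑ t ∈ E.erase u, F t) := Finset.sum_congr rfl key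
    _ = E.card • Dg + ∑ u ∈ E, ∑ t ∈ E.erase u, F t := by
        rw [Finset.sum_add_distrib, Finset.sum_const]
    _ = w • Dg + (w - 1) • ∑ t ∈ E, F t := by
        rw [hEcard]
        congr 1
        have : ∀ u ∈ E, (∑ t ∈ E.erase u, F t) = (∑ t ∈ E, F t) - F u := fun u hu =>
          Finset.sum_erase_eq_sub hu
        rw [Finset.sum_congr rfl this, Finset.sum_sub_distrib, Finset.sum_const, hEcard]
        have hw1 : w = (w - 1) + 1 := by omega
        rw [hw1, succ_nsmul]
        abel
    _ = ((w * (n * l) : ℕ) : ℤ) • grpSum (G × U) T₀ +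
          ((w * l : ℕ) : ℤ) • grpSum (G × U) T₂ +
          (((w - 1) * μ : ℕ) : ℤ) • grpSum (G × U) T₃ +
          (((w - 1) * ν : ℕ) : ℤ) • grpSum (G × U) T₄ := by
        rw [hDg', hS, smul_add, smul_add]
        simp only [← Nat.cast_smul_eq_nsmul ℤ, smul_smul]
        push_cast
        module
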